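/- If n ≤ m, then the characteristic polynomial of L_{n−1}(n,m;q) equals (λ − q^{(n−1)m} + ∏_{s=1}^{n−1}(q^m − q^s)) · ∏_{j=0}^{n−2}(λ − q^{mj}). -/

import Mathlib

open Submodule

/-- The rank of a vector `v ∈ L^n`: the `Fq`-dimension of the `Fq`-span of its entries. -/
noncomputable def rkVec (Fq : Type*) {L : Type*} [Field Fq] [Field L] [Algebra Fq L]
    {n : ℕ} (v : Fin n → L) : ℕ :=
  Module.finrank Fq ↥(Submodule.span Fq (Set.range v))

/-- The rank-metric lattice `L_i(n,m;q)`: subspaces of `L^n` spanned by their vectors of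
rank at most `i`. -/
def RML (Fq L : Type*) [Field Fq] [Field L] [Algebra Fq L] (n i : ℕ) :
    Set (Submodule L (Fin n → L)) :=
  {X | X = Submodule.span L {x | x ∈ X ∧ rkVec Fq x ≤ i}}

/-- The meet in the rank-metric lattice: span of the rank-`≤ i` vectors of the intersection. -/
def rmlMeet (Fq : Type*) {L : Type*} [Field Fq] [Field L] [Algebra Fq L] {n : ℕ} (i : ℕ)
    (X Y : Submodule L (Fin n → L)) : Submodule L (Fin n → L) :=
  Submodule.span L {x | x ∈ X ⊓ Y ∧ rkVec Fq x ≤ i}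

/-- `X` is a modular element of the rank-metric lattice `L_i`. -/
def IsModularElt (Fq : Type*) {L : Type*} [Field Fq] [Field L] [Algebra Fq L] {n : ℕ} (i : ℕ)
    (X : Submodule L (Fin n → L)) : Prop :=
  ∀ Y ∈ RML Fq L n i,
    Module.finrank L ↥(rmlMeet Fq i X Y) + Module.finrank L ↥(X ⊔ Y)
      = Module.finrank L ↥X + Module.finrank L ↥Y


section CountAux

variable {K W : Type*} [Field K] [Fintype K] [AddCommGroup W] [Module K W] [Finite W]

/-- Rational-valued count of linearly independent tuples, valid for all lengths. -/
lemma card_linIndep_rat (d : ℕ) :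
    (Nat.card { s : Fin d → W // LinearIndependent K s } : ℚ) =
      ∏ j ∈ Finset.range d,
        ((Fintype.card K : ℚ) ^ (Module.finrank K W) - (Fintype.card K : ℚ) ^ j) := by
  have : Module.Finite K W := Module.Finite.of_finite
  rcases le_or_gt d (Module.finrank K W) with hd | hd
  · rw [card_linearIndependent hd]
    rw [← Fin.prod_univ_eq_prod_range
      (fun j => ((Fintype.card K : ℚ) ^ (Module.finrank K W) - (Fintype.card K : ℚ) ^ j)) d]
    rw [Nat.cast_prod]
    refine Finset.prod_congr rfl fun j _ => ?_
    rw [Nat.cast_sub (Nat.pow_le_pow_right Fintype.card_pos (le_trans (Nat.le_of_lt_succ (Nat.lt_succ_of_lt j.2)) hd))]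
    push_cast; ring
  · have : IsEmpty { s : Fin d → W // LinearIndependent K s } := by
      refine ⟨fun s => absurd (LinearIndependent.fintype_card_le_finrank s.2) ?_⟩
      simpa using hd
    rw [Nat.card_of_isEmpty]
    rw [eq_comm]
    refine Finset.prod_eq_zero (Finset.mem_range.mpr hd) ?_
    simp

end CountAux


section CountAux2

variable {K V W : Type*} [Field K] [Fintype K] [AddCommGroup V] [Module K V]
  [AddCommGroup W] [Module K W] [Finite V] [Finite W]

/-- Maps with kernel containing `U` correspond to maps on the quotient. -/
noncomputable def kerLeEquiv (U : Submodule K V) :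
    { φ : V →ₗ[K] W // U ≤ LinearMap.ker φ } ≃ ((V ⧸ U) →ₗ[K] W) where
  toFun φ := U.liftQ φ.1 φ.2
  invFun ψ := ⟨ψ.comp U.mkQ, fun x hx => by
    simp [LinearMap.mem_ker, (Submodule.Quotient.mk_eq_zero U).mpr hx]⟩
  left_inv φ := Subtype.ext (U.liftQ_mkQ φ.1 φ.2)
  right_inv ψ := by
    refine LinearMap.ext fun z => ?_
    obtain ⟨x, rfl⟩ := Submodule.Quotient.mk_surjective U z
    simp

/-- Maps with kernel exactly `U` correspond to injective maps on the quotient. -/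
noncomputable def kerEqEquiv (U : Submodule K V) :
    { φ : V →ₗ[K] W // LinearMap.ker φ = U } ≃
      { ψ : (V ⧸ U) →ₗ[K] W // Function.Injective ψ } where
  toFun φ := ⟨U.liftQ φ.1 φ.2.ge, by
    rw [← LinearMap.ker_eq_bot]
    exact Submodule.ker_liftQ_eq_bot _ _ _ φ.2.le⟩
  invFun ψ := ⟨ψ.1.comp U.mkQ, by
    rw [LinearMap.ker_comp, LinearMap.ker_eq_bot.mpr ψ.2, Submodule.comap_bot,
      Submodule.ker_mkQ]⟩
  left_inv φ := Subtype.ext (U.liftQ_mkQ φ.1 φ.2.ge)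
  right_inv ψ := by
    refine Subtype.ext (LinearMap.ext fun z => ?_)
    obtain ⟨x, rfl⟩ := Submodule.Quotient.mk_surjective U z
    simp

/-- Injective maps out of a finite-dimensional space correspond to linearly
independent tuples. -/
noncomputable def injEquivLinIndep (M : Type*) [AddCommGroup M] [Module K M]
    [FiniteDimensional K M] :
    { ψ : M →ₗ[K] W // Function.Injective ψ } ≃
      { s : Fin (Module.finrank K M) → W // LinearIndependent K s } where
  toFun ψ := ⟨ψ.1 ∘ (Module.finBasis K M),
    (Module.finBasis K M).linearIndependent.map' ψ.1 (LinearMap.ker_eq_bot.mpr ψ.2)⟩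
  invFun s := ⟨(Module.finBasis K M).constr ℕ s.1, by
    rw [← LinearMap.ker_eq_bot, LinearMap.ker_eq_bot']
    intro x hx
    rw [Module.Basis.constr_apply, ← Finsupp.linearCombination_apply] at hx
    have h0 : ((Module.finBasis K M).repr x) = 0 := by
      have := linearIndependent_iff_ker.mp s.2
      rw [LinearMap.ker_eq_bot] at this
      exact this (by simpa using hx)
    simpa using congrArg ((Module.finBasis K M).repr.symm) h0⟩
  left_inv ψ := Subtype.ext ((Module.finBasis K M).constr_self ℕ ψ.1)
  right_inv s := Subtype.ext (funext fun i => (Module.finBasis K M).constr_basis ℕ s.1 i)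

end CountAux2


section CountAux3
variable {K V W : Type*} [Field K] [Fintype K] [AddCommGroup V] [Module K V]
  [AddCommGroup W] [Module K W] [Finite V] [Finite W]

lemma card_kerLe (U : Submodule K V) :
    (Nat.card { φ : V →ₗ[K] W // U ≤ LinearMap.ker φ } : ℚ) =
      (Fintype.card K : ℚ) ^ ((Module.finrank K V - Module.finrank K U) *
        Module.finrank K W) := by
  have : Module.Finite K V := Module.Finite.of_finite
  have : Module.Finite K W := Module.Finite.of_finite
  rw [Nat.card_congr (kerLeEquiv U)]
  have hfin : Finite ((V ⧸ U) →ₗ[K] W) := by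
    have : Finite (V ⧸ U) := Finite.of_surjective _ (Submodule.Quotient.mk_surjective U)
    exact Finite.of_injective (fun f => (f : (V ⧸ U) → W)) DFunLike.coe_injective
  have h1 : Nat.card ((V ⧸ U) →ₗ[K] W) =
      Fintype.card K ^ (Module.finrank K ((V ⧸ U) →ₗ[K] W)) := by
    have : Fintype ((V ⧸ U) →ₗ[K] W) := Fintype.ofFinite _
    rw [Nat.card_eq_fintype_card, Module.card_eq_pow_finrank (K := K)]
  rw [h1, Module.finrank_linearMap]
  have h2 : Module.finrank K (V ⧸ U) = Module.finrank K V - Module.finrank K U := by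
    have := U.finrank_quotient_add_finrank
    omega
  rw [h2]
  push_cast
  ring

lemma card_kerEq (U : Submodule K V) :
    (Nat.card { φ : V →ₗ[K] W // LinearMap.ker φ = U } : ℚ) =
      ∏ j ∈ Finset.range (Module.finrank K V - Module.finrank K U),
        ((Fintype.card K : ℚ) ^ (Module.finrank K W) - (Fintype.card K : ℚ) ^ j) := by
  have : Module.Finite K V := Module.Finite.of_finite
  rw [Nat.card_congr ((kerEqEquiv U).trans (injEquivLinIndep (V ⧸ U))),
    card_linIndep_rat]
  have h2 : Module.finrank K (V ⧸ U) = Module.finrank K V - Module.finrank K U := by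
    have := U.finrank_quotient_add_finrank
    omega
  rw [h2]

end CountAux3

section RkVecAux
variable (Fq : Type*) {L : Type*} [Field Fq] [Field L] [Algebra Fq L]

lemma rkVec_le {n : ℕ} (v : Fin n → L) : rkVec Fq v ≤ n := by
  simpa [rkVec, Set.finrank] using finrank_range_le_card (R := Fq) v

lemma rkVec_eq_iff {n : ℕ} (v : Fin n → L) :
    rkVec Fq v = n ↔ LinearIndependent Fq v := by
  rw [linearIndependent_iff_card_eq_finrank_span, Fintype.card_fin, eq_comm]
  rfl

lemma rkVec_smul {n : ℕ} (c : L) (hc : c ≠ 0) (v : Fin n → L) :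
    rkVec Fq (c • v) = rkVec Fq v := by
  let e : L ≃ₗ[Fq] L :=
    { toFun := fun x => c * x
      map_add' := mul_add c
      map_smul' := fun a x => by simp [Algebra.smul_def]; ring
      invFun := fun x => c⁻¹ * x
      left_inv := fun x => by field_simp
      right_inv := fun x => by field_simp }
  have hr : Set.range (c • v) = e '' Set.range v := by
    ext x
    simp only [Set.mem_range, Set.mem_image]
    constructor
    · rintro ⟨i, rfl⟩; exact ⟨v i, ⟨i, rfl⟩, rfl⟩
    · rintro ⟨y, ⟨i, rfl⟩, rfl⟩; exact ⟨i, rfl⟩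
  have h2 : span Fq (⇑e '' Set.range v) = Submodule.map (e : L →ₗ[Fq] L) (span Fq (Set.range v)) :=
    (Submodule.map_span _ _).symm
  rw [rkVec, hr, h2, LinearEquiv.finrank_map_eq]
  rfl

lemma rkVec_succ_le {n : ℕ} [FiniteDimensional Fq L] (v : Fin (n + 1) → L) (hv : v 0 = 0) :
    rkVec Fq v ≤ n := by
  have hsub : Set.range v ⊆ insert 0 (Set.range (v ∘ Fin.succ)) := by
    rintro x ⟨i, rfl⟩
    rcases Fin.eq_zero_or_eq_succ i with rfl | ⟨j, rfl⟩
    · left; exact hv.symm ▸ rfl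
    · right; exact ⟨j, rfl⟩
  calc rkVec Fq v ≤ Module.finrank Fq (span Fq (Set.range (v ∘ Fin.succ))) := by
        refine Submodule.finrank_mono ?_
        refine (span_mono hsub).trans ?_
        rw [Submodule.span_insert_eq_span (Submodule.zero_mem _)]
    _ ≤ n := by simpa [Set.finrank] using finrank_range_le_card (R := Fq) (v ∘ Fin.succ)

end RkVecAux

section RMLAux
variable (Fq : Type*) {L : Type*} [Field Fq] [Field L] [Algebra Fq L] {n i : ℕ}

lemma bot_mem_RML : (⊥ : Submodule L (Fin n → L)) ∈ RML Fq L n i := by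
  refine le_antisymm bot_le (span_le.mpr fun x hx => hx.1)

/-- Closure: the span of the low-rank vectors of a submodule. -/
def rmlCl (i : ℕ) (U : Submodule L (Fin n → L)) : Submodule L (Fin n → L) :=
  span L {x | x ∈ U ∧ rkVec Fq x ≤ i}

lemma rmlCl_le (U : Submodule L (Fin n → L)) : rmlCl Fq i U ≤ U :=
  span_le.mpr fun _ hx => hx.1

lemma rmlCl_mem_RML (U : Submodule L (Fin n → L)) : rmlCl Fq i U ∈ RML Fq L n i := by
  refine le_antisymm ?_ (span_le.mpr fun x hx => hx.1)
  exact span_mono fun x hx => ⟨subset_span hx, hx.2⟩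

lemma le_rmlCl_iff {X : Submodule L (Fin n → L)} (hX : X ∈ RML Fq L n i)
    (U : Submodule L (Fin n → L)) : X ≤ U ↔ X ≤ rmlCl Fq i U := by
  constructor
  · intro h
    rw [show X = span L {x | x ∈ X ∧ rkVec Fq x ≤ i} from hX]
    exact span_mono fun x hx => ⟨h hx.1, hx.2⟩
  · intro h
    exact h.trans (rmlCl_le Fq U)

lemma rmlCl_eq_bot_iff (U : Submodule L (Fin n → L)) :
    rmlCl Fq i U = ⊥ ↔ ∀ v ∈ U, rkVec Fq v ≤ i → v = 0 := by
  rw [rmlCl, span_eq_bot]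
  constructor
  · intro h v hv hr; exact h v ⟨hv, hr⟩
  · rintro h v ⟨hv, hr⟩; exact h v hv hr

end RMLAux

section KerStruct
variable {Fq L : Type*} [Field Fq] [Field L] [Algebra Fq L] [FiniteDimensional Fq L]

lemma ker_dim_le_one {n : ℕ} (hn : 2 ≤ n) {U : Submodule L (Fin n → L)}
    (hU : ∀ v ∈ U, rkVec Fq v ≤ n - 1 → v = 0) : Module.finrank L U ≤ 1 := by
  by_contra hcon
  push_neg at hcon
  obtain ⟨n', rfl⟩ : ∃ n', n = n' + 1 := ⟨n - 1, by omega⟩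
  set π : (Fin (n' + 1) → L) →ₗ[L] L := LinearMap.proj 0 with hπ
  set H : Submodule L (Fin (n' + 1) → L) := LinearMap.ker π with hH
  have hπsurj : Function.Surjective π := fun c => ⟨Pi.single 0 c, by simp [hπ]⟩
  have hdimV : Module.finrank L (Fin (n' + 1) → L) = n' + 1 := by
    simp [Module.finrank_fintype_fun_eq_card]
  have hdimH : Module.finrank L H = n' := by
    rw [hH]
    have h1 := π.finrank_range_add_finrank_ker
    rw [LinearMap.range_eq_top.mpr hπsurj, finrank_top, Module.finrank_self, hdimV] at h1
    omega
  have hsup : Module.finrank L ↥(U ⊔ H) ≤ n' + 1 := by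
    have := Submodule.finrank_le (U ⊔ H)
    omega
  have hinf := Submodule.finrank_sup_add_finrank_inf_eq U H
  have hpos : Module.finrank L ↥(U ⊓ H) ≠ 0 := by omega
  have hne : U ⊓ H ≠ ⊥ := by
    intro hbot
    rw [hbot] at hpos
    simp at hpos
  obtain ⟨v, hv, hv0⟩ := Submodule.exists_mem_ne_zero_of_ne_bot hne
  have hv0' : v 0 = 0 := by
    have := hv.2
    simpa [hH, hπ, LinearMap.mem_ker] using this
  have hrk : rkVec Fq v ≤ n' + 1 - 1 := by
    simpa using rkVec_succ_le Fq v hv0'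
  exact hv0 (hU v hv.1 hrk)

end KerStruct

section Lines
open Finset in
open Classical in
lemma lines_card (q m n : ℕ) {Fq L : Type*} [Field Fq] [Field L] [Algebra Fq L]
    [Fintype Fq] [Fintype L] (hcard : Fintype.card Fq = q) (hdim : Module.finrank Fq L = m)
    (hn : 2 ≤ n) :
    ((Fintype.card L : ℚ) - 1) *
      ((Nat.card {U : Submodule L (Fin n → L) //
        (∀ v ∈ U, rkVec Fq v ≤ n - 1 → v = 0) ∧ U ≠ ⊥}) : ℚ)
      = ∏ j ∈ Finset.range n, ((q : ℚ) ^ m - (q : ℚ) ^ j) := by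
  rw [Nat.card_eq_fintype_card, Fintype.card_subtype]
  haveI : Module.Finite Fq L := Module.Finite.of_finite
  set T : Finset (Submodule L (Fin n → L)) := Finset.univ.filter (fun U =>
    (∀ v ∈ U, rkVec Fq v ≤ n - 1 → v = 0) ∧ U ≠ ⊥) with hT
  have hrk0 : rkVec Fq (0 : Fin n → L) = 0 := by
    have hne : Nonempty (Fin n) := ⟨⟨0, by omega⟩⟩
    simp [rkVec, Set.range_zero]
  have hne0 : ∀ v : Fin n → L, rkVec Fq v = n → v ≠ 0 := by
    intro v hv h0
    rw [h0, hrk0] at hv; omega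
  have main : (Finset.univ.filter (fun v : Fin n → L => rkVec Fq v = n)).card
      = ∑ U ∈ T, ((Finset.univ.filter (fun v : Fin n → L => rkVec Fq v = n)).filter
          (fun v => Submodule.span L {v} = U)).card := by
    refine Finset.card_eq_sum_card_fiberwise ?_
    intro v hv
    simp only [Finset.mem_coe] at hv ⊢
    rw [Finset.mem_filter] at hv
    have hv0 := hne0 v hv.2
    rw [hT, Finset.mem_filter]
    refine ⟨Finset.mem_univ _, ?_, ?_⟩
    · intro u hu hrk
      rw [Submodule.mem_span_singleton] at hu
      obtain ⟨c, rfl⟩ := hu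
      rcases eq_or_ne c 0 with rfl | hc
      · simp
      · rw [rkVec_smul Fq c hc v, hv.2] at hrk; omega
    · rw [Ne, Submodule.span_singleton_eq_bot]
      exact hv0
  have fiber : ∀ U ∈ T, ((Finset.univ.filter (fun v : Fin n → L => rkVec Fq v = n)).filter
      (fun v => Submodule.span L {v} = U)).card = Fintype.card L - 1 := by
    intro U hU
    rw [hT, Finset.mem_filter] at hU
    obtain ⟨-, hUprop, hUne⟩ := hU
    have hd1 : Module.finrank L U = 1 := by
      have h1 : Module.finrank L U ≤ 1 := ker_dim_le_one hn hUprop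
      have h2 : Module.finrank L U ≠ 0 := by
        rw [Ne, Submodule.finrank_eq_zero]; exact hUne
      omega
    have hiff : ∀ v : Fin n → L,
        (rkVec Fq v = n ∧ Submodule.span L {v} = U) ↔ (v ∈ U ∧ v ≠ 0) := by
      intro v
      constructor
      · rintro ⟨hrk, rfl⟩
        exact ⟨Submodule.mem_span_singleton_self v, hne0 v hrk⟩
      · rintro ⟨hvU, hv0⟩
        have hrkn : rkVec Fq v = n := by
          have h1 : ¬ rkVec Fq v ≤ n - 1 := fun h => hv0 (hUprop v hvU h)
          have h2 := rkVec_le Fq v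
          omega
        refine ⟨hrkn, ?_⟩
        refine Submodule.eq_of_le_of_finrank_le ((Submodule.span_singleton_le_iff_mem v U).mpr hvU) ?_
        rw [hd1, finrank_span_singleton hv0]
    rw [Finset.filter_filter]
    calc (Finset.univ.filter (fun v : Fin n → L =>
            rkVec Fq v = n ∧ Submodule.span L {v} = U)).card
        = (Finset.univ.filter (fun v : Fin n → L => v ∈ U ∧ v ≠ 0)).card := by
          congr 1
          exact Finset.filter_congr (fun v _ => hiff v)
      _ = Fintype.card {u : U // u ≠ 0} := by
          rw [← Fintype.card_subtype]
          refine Fintype.card_congr ?_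
          refine ⟨fun v => ⟨⟨v.1, v.2.1⟩, fun h => v.2.2 (congrArg Subtype.val h)⟩,
            fun u => ⟨u.1.1, u.1.2, fun h => u.2 (Subtype.ext h)⟩, fun v => rfl, fun u => rfl⟩
      _ = Fintype.card U - 1 := by
          have h := Fintype.card_subtype_compl (p := fun u : U => u = 0)
          rw [Fintype.card_subtype_eq] at h
          convert h using 2
      _ = Fintype.card L - 1 := by
          rw [Module.card_eq_pow_finrank (K := L) (V := U), hd1, pow_one]
  have hcount : ((Finset.univ.filter (fun v : Fin n → L => rkVec Fq v = n)).card : ℚ)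
      = ∏ j ∈ Finset.range n, ((q : ℚ) ^ m - (q : ℚ) ^ j) := by
    have h1 : (Finset.univ.filter (fun v : Fin n → L => rkVec Fq v = n)).card
        = Nat.card {v : Fin n → L // LinearIndependent Fq v} := by
      rw [Nat.card_eq_fintype_card, ← Fintype.card_subtype]
      exact Fintype.card_congr (Equiv.subtypeEquivRight fun v => rkVec_eq_iff Fq v)
    rw [h1, card_linIndep_rat, hcard, hdim]
  have hcardL : 1 ≤ Fintype.card L := Fintype.card_pos
  rw [← hcount, main, Finset.sum_congr rfl fiber, Finset.sum_const, smul_eq_mul]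
  push_cast [Nat.cast_sub hcardL]
  ring
end Lines

open scoped Classical in
theorem charPoly_rml_n_sub_one (q m n : ℕ) (hq : IsPrimePow q) (hn : 2 ≤ n)
    (hnm : n ≤ m) (Fq L : Type) [Field Fq] [Field L] [Algebra Fq L] [Fintype Fq]
    (hcard : Fintype.card Fq = q) (hdim : Module.finrank Fq L = m)
    (μ : Submodule L (Fin n → L) → ℚ)
    (hμ : ∀ t ∈ RML Fq L n (n - 1),
      (∑ᶠ s ∈ {s | s ∈ RML Fq L n (n - 1) ∧ s ≤ t}, μ s) = if t = ⊥ then 1 else 0) :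
    ∀ x : ℚ,
      (∑ᶠ X ∈ RML Fq L n (n - 1), μ X * x ^ (n - Module.finrank L ↥X)) =
        (x - (q : ℚ) ^ ((n - 1) * m) +
            ∏ s ∈ Finset.Icc 1 (n - 1), ((q : ℚ) ^ m - (q : ℚ) ^ s)) *
          ∏ j ∈ Finset.range (n - 1), (x - (q : ℚ) ^ (m * j)) := by
  -- basic instances
  haveI hFD : FiniteDimensional Fq L := FiniteDimensional.of_finrank_pos (by omega)
  haveI : Finite L := Module.finite_of_finite Fq
  haveI : Fintype L := Fintype.ofFinite L
  haveI : Finite (Submodule L (Fin n → L)) :=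
    Finite.of_injective _ (SetLike.coe_injective (A := Submodule L (Fin n → L)))
  haveI : Fintype (Submodule L (Fin n → L)) := Fintype.ofFinite _
  have hq2 : 2 ≤ q := hq.two_le
  have hm : 2 ≤ m := le_trans hn hnm
  have hQ : Fintype.card L = q ^ m := by
    rw [Module.card_eq_pow_finrank (K := Fq), hcard, hdim]
  have hQQ : (Fintype.card L : ℚ) = (q : ℚ) ^ m := by rw [hQ]; push_cast; ring
  -- the lattice as a finset
  set 𝓛 : Finset (Submodule L (Fin n → L)) :=
    Finset.univ.filter (· ∈ RML Fq L n (n - 1)) with h𝓛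
  have hmem𝓛 : ∀ X, X ∈ 𝓛 ↔ X ∈ RML Fq L n (n - 1) := by
    intro X; simp [h𝓛]
  have hbot : (⊥ : Submodule L (Fin n → L)) ∈ 𝓛 := (hmem𝓛 _).mpr (bot_mem_RML Fq)
  have hμ' : ∀ t ∈ 𝓛, (∑ s ∈ 𝓛.filter (· ≤ t), μ s) = if t = ⊥ then 1 else 0 := by
    intro t ht
    rw [← hμ t ((hmem𝓛 t).mp ht)]
    rw [show {s | s ∈ RML Fq L n (n - 1) ∧ s ≤ t} = ↑(𝓛.filter (· ≤ t)) by
      ext s; simp [hmem𝓛]]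
    rw [finsum_mem_coe_finset]
  set P : ℚ := ∏ s ∈ Finset.Icc 1 (n - 1), ((q : ℚ) ^ m - (q : ℚ) ^ s) with hP
  -- the candidate polynomial
  set p : Polynomial ℚ :=
    (∑ X ∈ 𝓛, Polynomial.C (μ X) * Polynomial.X ^ (n - Module.finrank L ↥X)) -
      ((Polynomial.X - Polynomial.C ((q : ℚ) ^ ((n - 1) * m)) + Polynomial.C P) *
        ∏ j ∈ Finset.range (n - 1),
          (Polynomial.X - Polynomial.C ((q : ℚ) ^ (m * j)))) with hp
  have hpeval : ∀ x : ℚ, p.eval x =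
      (∑ X ∈ 𝓛, μ X * x ^ (n - Module.finrank L ↥X)) -
        ((x - (q : ℚ) ^ ((n - 1) * m) + P) *
          ∏ j ∈ Finset.range (n - 1), (x - (q : ℚ) ^ (m * j))) := by
    intro x
    simp [hp, Polynomial.eval_finset_sum, Polynomial.eval_prod]
  -- the set of admissible kernels
  set T : Finset (Submodule L (Fin n → L)) := Finset.univ.filter (fun U =>
    (∀ v ∈ U, rkVec Fq v ≤ n - 1 → v = 0) ∧ U ≠ ⊥) with hTdef
  have hTP : (T.card : ℚ) = P := by
    have h1 := lines_card q m n hcard hdim hn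
    have hTc : (T.card : ℚ) = ((Nat.card {U : Submodule L (Fin n → L) //
        (∀ v ∈ U, rkVec Fq v ≤ n - 1 → v = 0) ∧ U ≠ ⊥}) : ℚ) := by
      rw [Nat.card_eq_fintype_card, Fintype.card_subtype, hTdef]
    rw [← hTc] at h1
    have h2 : ∏ j ∈ Finset.range n, ((q : ℚ) ^ m - (q : ℚ) ^ j)
        = ((q : ℚ) ^ m - 1) * P := by
      have hr : Finset.range n = insert 0 (Finset.Icc 1 (n - 1)) := by
        ext j
        simp only [Finset.mem_range, Finset.mem_insert, Finset.mem_Icc]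
        omega
      rw [hr, Finset.prod_insert (by simp), hP, pow_zero]
    have hne : ((q : ℚ) ^ m - 1) ≠ 0 := by
      have : (1 : ℚ) < (q : ℚ) ^ m :=
        one_lt_pow₀ (by exact_mod_cast hq2.trans_lt' one_lt_two) (by omega)
      linarith
    rw [hQQ, h2] at h1
    field_simp at h1
    linarith
  -- evaluation at the points (q^m)^k
  have hroot : ∀ k : ℕ, p.eval (((q : ℚ) ^ m) ^ k) = 0 := by
    intro k
    haveI : Finite ((Fin n → L) →ₗ[L] (Fin k → L)) :=
      Finite.of_injective _ (DFunLike.coe_injective)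
    haveI : Fintype ((Fin n → L) →ₗ[L] (Fin k → L)) := Fintype.ofFinite _
    have hfV : Module.finrank L (Fin n → L) = n := by
      simp [Module.finrank_fintype_fun_eq_card]
    have hfW : Module.finrank L (Fin k → L) = k := by
      simp [Module.finrank_fintype_fun_eq_card]
    set h : Submodule L (Fin n → L) → ℚ := fun t =>
      ((Finset.univ.filter (fun φ : (Fin n → L) →ₗ[L] (Fin k → L) =>
        rmlCl Fq (n - 1) (LinearMap.ker φ) = t)).card : ℚ) with hh
    -- Step A: counting maps whose kernel contains X
    have stepA : ∀ X ∈ 𝓛, (((q : ℚ) ^ m) ^ k) ^ (n - Module.finrank L ↥X)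
        = ∑ t ∈ 𝓛.filter (fun t => X ≤ t), h t := by
      intro X hX
      have hXR : X ∈ RML Fq L n (n - 1) := (hmem𝓛 X).mp hX
      have hcardle := card_kerLe (K := L) (W := Fin k → L) X
      rw [hfV, hfW, hQQ] at hcardle
      have hpart : (Nat.card { φ : (Fin n → L) →ₗ[L] (Fin k → L) //
          X ≤ LinearMap.ker φ } : ℚ) = ∑ t ∈ 𝓛.filter (fun t => X ≤ t), h t := by
        rw [Nat.card_eq_fintype_card, Fintype.card_subtype]
        rw [Finset.card_eq_sum_card_fiberwise
          (f := fun φ => rmlCl Fq (n - 1) (LinearMap.ker φ))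
          (t := 𝓛.filter (fun t => X ≤ t)) ?_]
        · push_cast
          refine Finset.sum_congr rfl fun t ht => ?_
          rw [Finset.mem_filter] at ht
          rw [hh]
          congr 1
          rw [Finset.filter_filter]
          refine congrArg _ (Finset.filter_congr fun φ _ => ?_)
          constructor
          · rintro ⟨-, h2⟩; exact h2
          · intro h2
            refine ⟨?_, h2⟩
            exact ((le_rmlCl_iff Fq hXR (LinearMap.ker φ)).mpr (h2 ▸ ht.2))
        · intro φ hφ
          simp only [Finset.mem_coe] at hφ ⊢
          rw [Finset.mem_filter] at hφ ⊢
          refine ⟨(hmem𝓛 _).mpr (rmlCl_mem_RML Fq _), ?_⟩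
          exact (le_rmlCl_iff Fq hXR (LinearMap.ker φ)).mp hφ.2
      rw [← hpart, hcardle, ← pow_mul, ← pow_mul]
      ring_nf
    -- Step B: Möbius inversion
    have stepB : (∑ X ∈ 𝓛, μ X * (((q : ℚ) ^ m) ^ k) ^ (n - Module.finrank L ↥X))
        = h ⊥ := by
      calc (∑ X ∈ 𝓛, μ X * (((q : ℚ) ^ m) ^ k) ^ (n - Module.finrank L ↥X))
          = ∑ X ∈ 𝓛, ∑ t ∈ 𝓛, if X ≤ t then μ X * h t else 0 := by
            refine Finset.sum_congr rfl fun X hX => ?_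
            rw [stepA X hX, Finset.mul_sum]
            exact Finset.sum_filter (fun t => X ≤ t) (fun t => μ X * h t)
        _ = ∑ t ∈ 𝓛, ∑ X ∈ 𝓛, if X ≤ t then μ X * h t else 0 := Finset.sum_comm
        _ = ∑ t ∈ 𝓛, (∑ X ∈ 𝓛.filter (· ≤ t), μ X) * h t := by
            refine Finset.sum_congr rfl fun t _ => ?_
            rw [Finset.sum_mul]
            rw [← Finset.sum_filter (fun X => X ≤ t) (fun X => μ X * h t)]
        _ = ∑ t ∈ 𝓛, (if t = ⊥ then (1 : ℚ) else 0) * h t := by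
            refine Finset.sum_congr rfl fun t ht => ?_
            rw [hμ' t ht]
        _ = h ⊥ := by
            rw [Finset.sum_congr rfl (fun t _ => ite_mul (t = ⊥) 1 0 (h t))]
            simp only [one_mul, zero_mul]
            rw [Finset.sum_ite_eq' 𝓛 ⊥ h]
            simp [hbot]
    -- Step C: computing h ⊥ by classifying kernels
    have stepC : h ⊥ =
        (∏ j ∈ Finset.range n, ((((q : ℚ) ^ m) ^ k) - ((q : ℚ) ^ m) ^ j)) +
          P * ∏ j ∈ Finset.range (n - 1), ((((q : ℚ) ^ m) ^ k) - ((q : ℚ) ^ m) ^ j) := by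
      have hcnt : ∀ U : Submodule L (Fin n → L),
          ((Finset.univ.filter (fun φ : (Fin n → L) →ₗ[L] (Fin k → L) =>
            LinearMap.ker φ = U)).card : ℚ) =
          ∏ j ∈ Finset.range (n - Module.finrank L ↥U),
            ((((q : ℚ) ^ m) ^ k) - ((q : ℚ) ^ m) ^ j) := by
        intro U
        have := card_kerEq (K := L) (W := Fin k → L) U
        rw [hfV, hfW, hQQ, Nat.card_eq_fintype_card, Fintype.card_subtype] at this
        exact this
      have hbotnotT : (⊥ : Submodule L (Fin n → L)) ∉ T := by
        simp [hTdef]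
      have hpartition : (Finset.univ.filter
          (fun φ : (Fin n → L) →ₗ[L] (Fin k → L) =>
            rmlCl Fq (n - 1) (LinearMap.ker φ) = ⊥)).card
          = ∑ U ∈ insert ⊥ T, (Finset.univ.filter
            (fun φ : (Fin n → L) →ₗ[L] (Fin k → L) => LinearMap.ker φ = U)).card := by
        have hrw : ∀ φ : (Fin n → L) →ₗ[L] (Fin k → L),
            rmlCl Fq (n - 1) (LinearMap.ker φ) = ⊥ ↔
              (∀ v ∈ LinearMap.ker φ, rkVec Fq v ≤ n - 1 → v = 0) :=
          fun φ => rmlCl_eq_bot_iff Fq _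
        rw [Finset.filter_congr (fun φ _ => hrw φ)]
        rw [Finset.card_eq_sum_card_fiberwise (f := fun φ => LinearMap.ker φ)
          (t := insert ⊥ T) ?_]
        · refine Finset.sum_congr rfl fun U hU => ?_
          congr 1
          rw [Finset.filter_filter]
          refine Finset.filter_congr fun φ _ => ?_
          constructor
          · rintro ⟨-, h2⟩; exact h2
          · intro h2
            refine ⟨?_, h2⟩
            rw [Finset.mem_insert] at hU
            rcases hU with rfl | hU
            · intro v hv _
              rw [h2] at hv
              simpa using hv
            · rw [hTdef, Finset.mem_filter] at hU
              intro v hv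
              exact hU.2.1 v (h2 ▸ hv)
        · intro φ hφ
          simp only [Finset.mem_coe] at hφ ⊢
          rw [Finset.mem_filter] at hφ
          rw [Finset.mem_insert]
          by_cases hk : LinearMap.ker φ = ⊥
          · exact Or.inl hk
          · exact Or.inr (by rw [hTdef, Finset.mem_filter]
                             exact ⟨Finset.mem_univ _, hφ.2, hk⟩)
      have hU1 : ∀ U ∈ T, Module.finrank L ↥U = 1 := by
        intro U hU
        rw [hTdef, Finset.mem_filter] at hU
        have h1 : Module.finrank L ↥U ≤ 1 := ker_dim_le_one hn hU.2.1
        have h2 : Module.finrank L ↥U ≠ 0 := by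
          rw [Ne, Submodule.finrank_eq_zero]; exact hU.2.2
        omega
      rw [hh]
      simp only
      rw [hpartition]
      push_cast
      rw [Finset.sum_insert hbotnotT]
      rw [hcnt ⊥]
      have : Module.finrank L (⊥ : Submodule L (Fin n → L)) = 0 := finrank_bot L _
      rw [this, Nat.sub_zero]
      congr 1
      rw [Finset.sum_congr rfl (fun U hU => by rw [hcnt U, hU1 U hU])]
      rw [Finset.sum_const, nsmul_eq_mul, hTP]
    -- put the pieces together
    rw [hpeval, stepB, stepC]
    have hsplit : ∏ j ∈ Finset.range n, ((((q : ℚ) ^ m) ^ k) - ((q : ℚ) ^ m) ^ j)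
        = (∏ j ∈ Finset.range (n - 1), ((((q : ℚ) ^ m) ^ k) - ((q : ℚ) ^ m) ^ j)) *
          ((((q : ℚ) ^ m) ^ k) - ((q : ℚ) ^ m) ^ (n - 1)) := by
      have : n = (n - 1) + 1 := by omega
      rw [this]
      rw [Finset.prod_range_succ]
      simp [← this]
    have hpow1 : (q : ℚ) ^ ((n - 1) * m) = ((q : ℚ) ^ m) ^ (n - 1) := by
      rw [← pow_mul, mul_comm]
    have hprodeq : ∏ j ∈ Finset.range (n - 1), ((((q : ℚ) ^ m) ^ k) - (q : ℚ) ^ (m * j))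
        = ∏ j ∈ Finset.range (n - 1), ((((q : ℚ) ^ m) ^ k) - ((q : ℚ) ^ m) ^ j) :=
      Finset.prod_congr rfl (fun j _ => by rw [pow_mul])
    rw [hprodeq, hsplit, hpow1]
    ring
  -- p vanishes at infinitely many points, hence is zero
  have hp0 : p = 0 := by
    refine Polynomial.eq_zero_of_infinite_isRoot p ?_
    have hgt1 : (1 : ℚ) < (q : ℚ) ^ m :=
      one_lt_pow₀ (by exact_mod_cast hq2.trans_lt' one_lt_two) (by omega)
    refine Set.infinite_of_injective_forall_mem
      (f := fun k : ℕ => ((q : ℚ) ^ m) ^ k) ?_ ?_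
    · exact fun a b hab => by
        by_contra hne
        rcases Nat.lt_or_ge a b with hlt | hge
        · exact absurd hab (ne_of_lt (pow_lt_pow_right₀ hgt1 hlt))
        · have hlt : b < a := by omega
          exact absurd hab.symm (ne_of_lt (pow_lt_pow_right₀ hgt1 hlt))
    · intro k
      exact hroot k
  -- conclude
  intro x
  have hfin : ∀ x : ℚ, (∑ᶠ X ∈ RML Fq L n (n - 1), μ X * x ^ (n - Module.finrank L ↥X))
      = ∑ X ∈ 𝓛, μ X * x ^ (n - Module.finrank L ↥X) := by
    intro x
    rw [show RML Fq L n (n - 1) = ↑𝓛 by ext X; simp [hmem𝓛]]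
    rw [finsum_mem_coe_finset]
  have := hpeval x
  rw [hp0] at this
  simp only [Polynomial.eval_zero] at this
  rw [hfin x]
  linarith [this]
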